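/- For λ = (λ₁ ≤ λ₂) ∈ ℤ², the polynomial P_λ(x₁,x₂) = x_+^{λ₁+λ₂} ((q;q)_{λ₂₁}/(t;q)_{λ₂₁}) C_{λ₂₁}((x_− + x_−^{−1})/2; t|q), with x_± = (x₁x₂^{±1})^{1/2}, is a common eigenfunction of the Macdonald operators H₁ = v₁₂ T_{q,x₁} + v₂₁ T_{q,x₂} and H₂ = T_{q,x₁}T_{q,x₂}, with eigenvalues h₁ = t^{−1/2}q^{λ₁} + t^{1/2}q^{λ₂} and h₂ = q^{λ₁+λ₂}, where v_{jk} = (t^{1/2}x_j − t^{−1/2}x_k)/(x_j − x_k). -/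

import Mathlib

open Finset

/-- The q-Pochhammer symbol `(a;q)_n`. -/
noncomputable def qPoch (a q : ℂ) (n : ℕ) : ℂ := ∏ j ∈ Finset.range n, (1 - a * q ^ j)

/-- The A₁ Macdonald polynomial P_λ written in the variables a = x₊ = (x₁x₂)^{1/2},
b = x₋ = (x₁/x₂)^{1/2}:
P_λ = a^{λ₁+λ₂} ((q;q)_{λ₂₁}/(t;q)_{λ₂₁}) C_{λ₂₁}((b+b⁻¹)/2; t|q), where the
continuous q-ultraspherical polynomial is the Laurent polynomial
C_n((b+b⁻¹)/2; t|q) = Σ_{k=0}^n (t;q)_k(t;q)_{n−k}/((q;q)_k(q;q)_{n−k}) b^{n−2k}. -/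
noncomputable def MacdonaldA1 (q t : ℂ) (l1 l2 : ℤ) (a b : ℂ) : ℂ :=
  a ^ (l1 + l2) * (qPoch q q (l2 - l1).toNat / qPoch t q (l2 - l1).toNat) *
    ∑ k ∈ range ((l2 - l1).toNat + 1),
      qPoch t q k * qPoch t q ((l2 - l1).toNat - k) /
        (qPoch q q k * qPoch q q ((l2 - l1).toNat - k)) *
      b ^ ((l2 - l1) - 2 * (k : ℤ))

lemma qPoch_succ (a q : ℂ) (n : ℕ) :
    qPoch a q (n + 1) = qPoch a q n * (1 - a * q ^ n) := Finset.prod_range_succ _ _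

lemma one_sub_ne {x q : ℝ} (hx0 : 0 < x) (hx1 : x < 1) (hq0 : 0 < q) (hq1 : q < 1)
    (j : ℕ) : (1 : ℂ) - (x : ℂ) * (q : ℂ) ^ j ≠ 0 := by
  have h1 : x * q ^ j < 1 := by
    calc x * q ^ j ≤ x * 1 := by
          apply mul_le_mul_of_nonneg_left _ hx0.le
          exact pow_le_one₀ hq0.le hq1.le
      _ < 1 := by linarith
  have h2 : (0:ℝ) < x * q ^ j := by positivity
  have : ((1 - x * q ^ j : ℝ) : ℂ) ≠ 0 := by
    exact_mod_cast ne_of_gt (by linarith : (0:ℝ) < 1 - x * q ^ j)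
  push_cast at this
  exact this

lemma qPoch_ne_zero {x q : ℝ} (hx0 : 0 < x) (hx1 : x < 1) (hq0 : 0 < q) (hq1 : q < 1)
    (n : ℕ) : qPoch (x : ℂ) (q : ℂ) n ≠ 0 := by
  apply Finset.prod_ne_zero_iff.2
  intro j _
  exact one_sub_ne hx0 hx1 hq0 hq1 j

lemma step_lemma (q t s : ℂ) (hs : s ≠ 0) (hts : s ^ 2 = t) (n k m : ℕ) (hn : n = k + m + 1)
    (hQk : qPoch q q k ≠ 0) (hQm : qPoch q q m ≠ 0)
    (h1 : (1:ℂ) - q * q ^ k ≠ 0) (h2 : (1:ℂ) - q * q ^ m ≠ 0) :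
    qPoch t q k * qPoch t q (n - k) / (qPoch q q k * qPoch q q (n - k)) *
      (s⁻¹ * q ^ (n - k) + s * q ^ k - s⁻¹ - s * q ^ n)
  = qPoch t q (k + 1) * qPoch t q (n - (k + 1)) /
      (qPoch q q (k + 1) * qPoch q q (n - (k + 1))) *
      (s * q ^ (n - (k + 1)) + s⁻¹ * q ^ (k + 1) - s⁻¹ - s * q ^ n) := by
  subst hn
  subst hts
  have e1 : k + m + 1 - k = m + 1 := by omega
  have e2 : k + m + 1 - (k + 1) = m := by omega
  rw [e1, e2, qPoch_succ (s^2) q m, qPoch_succ (s^2) q k, qPoch_succ q q m, qPoch_succ q q k]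
  rw [div_mul_eq_mul_div, div_mul_eq_mul_div, div_eq_div_iff (by simp [*]) (by simp [*])]
  field_simp
  ring

/-- The coefficients of the continuous q-ultraspherical polynomial. -/
noncomputable def cc (q t : ℂ) (n k : ℕ) : ℂ :=
  qPoch t q k * qPoch t q (n - k) / (qPoch q q k * qPoch q q (n - k))

/-- The q-ultraspherical polynomial rescaled as a polynomial in B = b². -/
noncomputable def Sc (q t : ℂ) (n : ℕ) (B : ℂ) : ℂ :=
  ∑ k ∈ range (n + 1), cc q t n k * B ^ (n - k)

lemma key_sum (q t s : ℂ) (hs : s ≠ 0) (hts : s ^ 2 = t) (n : ℕ)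
    (hQ : ∀ i : ℕ, qPoch q q i ≠ 0) (h1 : ∀ i : ℕ, (1:ℂ) - q * q ^ i ≠ 0) (B : ℂ) :
    (s * B - s⁻¹) * ∑ k ∈ range (n + 1), cc q t n k * (q ^ (n - k) * B ^ (n - k))
      + (s⁻¹ * B - s) * ∑ k ∈ range (n + 1), cc q t n k * (q ^ k * B ^ (n - k))
    = (B - 1) * (s⁻¹ + s * q ^ n) * ∑ k ∈ range (n + 1), cc q t n k * B ^ (n - k) := by
  rw [← sub_eq_zero, Finset.mul_sum, Finset.mul_sum, Finset.mul_sum,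
    ← Finset.sum_add_distrib, ← Finset.sum_sub_distrib]
  have hsplit : ∀ k ∈ range (n + 1),
      (s * B - s⁻¹) * (cc q t n k * (q ^ (n - k) * B ^ (n - k)))
        + (s⁻¹ * B - s) * (cc q t n k * (q ^ k * B ^ (n - k)))
        - (B - 1) * (s⁻¹ + s * q ^ n) * (cc q t n k * B ^ (n - k))
      = (cc q t n k * (s * q ^ (n - k) + s⁻¹ * q ^ k - s⁻¹ - s * q ^ n)) * B ^ (n + 1 - k)
        - (cc q t n k * (s⁻¹ * q ^ (n - k) + s * q ^ k - s⁻¹ - s * q ^ n)) * B ^ (n - k) := by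
    intro k hk
    have hk' : k ≤ n := by
      simpa [Nat.lt_succ_iff] using Finset.mem_range.1 hk
    have hB : B ^ (n + 1 - k) = B ^ (n - k) * B := by
      rw [← pow_succ]
      congr 1
      omega
    rw [hB]; ring
  rw [Finset.sum_congr rfl hsplit, Finset.sum_sub_distrib, sub_eq_zero]
  rw [Finset.sum_range_succ'
    (fun k => (cc q t n k * (s * q ^ (n - k) + s⁻¹ * q ^ k - s⁻¹ - s * q ^ n)) * B ^ (n + 1 - k)),
    Finset.sum_range_succ]
  have he0 : (cc q t n 0 * (s * q ^ (n - 0) + s⁻¹ * q ^ 0 - s⁻¹ - s * q ^ n)) * B ^ (n + 1 - 0) = 0 := by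
    simp only [Nat.sub_zero, pow_zero]
    ring
  have hfn : (cc q t n n * (s⁻¹ * q ^ (n - n) + s * q ^ n - s⁻¹ - s * q ^ n)) * B ^ (n - n) = 0 := by
    simp only [Nat.sub_self, pow_zero]
    ring
  rw [he0, hfn, add_zero, add_zero]
  apply Finset.sum_congr rfl
  intro k hk
  have hk' : k < n := Finset.mem_range.1 hk
  have hexp : n + 1 - (k + 1) = n - k := by omega
  rw [hexp]
  congr 1
  exact (step_lemma q t s hs hts n k (n - k - 1) (by omega) (hQ k) (hQ (n - k - 1))
    (h1 k) (h1 (n - k - 1))).symm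

lemma Mac_eq (q t : ℂ) (l1 l2 : ℤ) (hl : l1 ≤ l2) (a b : ℂ) (hb : b ≠ 0) :
    MacdonaldA1 q t l1 l2 a b
      = a ^ (l1 + l2) * (qPoch q q (l2 - l1).toNat / qPoch t q (l2 - l1).toNat) *
        ((b ^ (l2 - l1).toNat)⁻¹ * Sc q t (l2 - l1).toNat (b ^ 2)) := by
  unfold MacdonaldA1 Sc cc
  congr 1
  rw [Finset.mul_sum]
  apply Finset.sum_congr rfl
  intro k hk
  have hk' : k ≤ (l2 - l1).toNat := by
    have := Finset.mem_range.1 hk; omega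
  have hnl : ((l2 - l1).toNat : ℤ) = l2 - l1 := Int.toNat_of_nonneg (by omega)
  have hexp : l2 - l1 - 2 * (k : ℤ)
      = ((2 * ((l2 - l1).toNat - k) : ℕ) : ℤ) - ((l2 - l1).toNat : ℤ) := by
    omega
  rw [hexp, zpow_sub₀ hb, zpow_natCast, zpow_natCast, pow_mul, div_eq_mul_inv]
  ring

lemma assemble (s B R P X A C S0 S1 S2 : ℂ) (hs : s ≠ 0) (hR : R ≠ 0) (hP : P ≠ 0)
    (hB1 : B - 1 ≠ 0)
    (key : (s * B - s⁻¹) * S1 + (s⁻¹ * B - s) * S2 = (B - 1) * (s⁻¹ + s * R ^ 2) * S0) :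
    (s * B - s⁻¹) / (B - 1) * (X * R * A * C * ((R * P)⁻¹ * S1))
    + (s⁻¹ * B - s) / (B - 1) * (X * R * A * C * ((P / R)⁻¹ * ((R ^ 2)⁻¹ * S2)))
    = (s⁻¹ * X + s * (X * R ^ 2)) * (A * C * (P⁻¹ * S0)) := by
  have e1 : (s * B - s⁻¹) / (B - 1) * (X * R * A * C * ((R * P)⁻¹ * S1))
      = X * A * C * (P⁻¹ * (B - 1)⁻¹) * ((s * B - s⁻¹) * S1) := by
    field_simp
  have e2 : (s⁻¹ * B - s) / (B - 1) * (X * R * A * C * ((P / R)⁻¹ * ((R ^ 2)⁻¹ * S2)))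
      = X * A * C * (P⁻¹ * (B - 1)⁻¹) * ((s⁻¹ * B - s) * S2) := by
    field_simp
  rw [e1, e2, ← mul_add, key]
  field_simp

/-- P_λ is a common eigenfunction of the A₁ Macdonald operators
H₁ = v₁₂T_{q,x₁} + v₂₁T_{q,x₂} and H₂ = T_{q,x₁}T_{q,x₂}, with eigenvalues
h₁ = t^{−1/2}q^{λ₁} + t^{1/2}q^{λ₂} and h₂ = q^{λ₁+λ₂}.  Here x₁ = a·b,
x₂ = a/b, r = q^{1/2}, s = t^{1/2}; the shift T_{q,x₁} is (a,b) ↦ (ra, rb) and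
T_{q,x₂} is (a,b) ↦ (ra, b/r). -/
theorem macdonaldA1_eigenfunction (q t : ℝ) (hq : q ∈ Set.Ioo (0 : ℝ) 1)
    (ht : t ∈ Set.Ioo (0 : ℝ) 1) (r s : ℝ) (hr : 0 < r) (hr2 : r ^ 2 = q)
    (hs : 0 < s) (hs2 : s ^ 2 = t) (l1 l2 : ℤ) (hl : l1 ≤ l2)
    (a b : ℂ) (ha : a ≠ 0) (hb : b ≠ 0) (hb1 : b ^ 2 ≠ 1) :
    (((s : ℂ) * (a * b) - (s : ℂ)⁻¹ * (a / b)) / (a * b - a / b) *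
        MacdonaldA1 (q : ℂ) (t : ℂ) l1 l2 ((r : ℂ) * a) ((r : ℂ) * b)
      + ((s : ℂ) * (a / b) - (s : ℂ)⁻¹ * (a * b)) / (a / b - a * b) *
        MacdonaldA1 (q : ℂ) (t : ℂ) l1 l2 ((r : ℂ) * a) (b / (r : ℂ))
      = ((s : ℂ)⁻¹ * (q : ℂ) ^ l1 + (s : ℂ) * (q : ℂ) ^ l2) *
          MacdonaldA1 (q : ℂ) (t : ℂ) l1 l2 a b)
    ∧ MacdonaldA1 (q : ℂ) (t : ℂ) l1 l2 ((q : ℂ) * a) b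
        = (q : ℂ) ^ (l1 + l2) * MacdonaldA1 (q : ℂ) (t : ℂ) l1 l2 a b := by
  obtain ⟨hq0, hq1⟩ := hq
  obtain ⟨ht0, ht1⟩ := ht
  have hqC : (q : ℂ) ≠ 0 := by exact_mod_cast hq0.ne'
  have hrC : (r : ℂ) ≠ 0 := by exact_mod_cast hr.ne'
  have hsC : (s : ℂ) ≠ 0 := by exact_mod_cast hs.ne'
  have hr2C : (r : ℂ) ^ 2 = (q : ℂ) := by exact_mod_cast hr2
  have hs2C : (s : ℂ) ^ 2 = (t : ℂ) := by exact_mod_cast hs2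
  constructor
  · set n := (l2 - l1).toNat with hn_def
    have hnl : ((n : ℤ)) = l2 - l1 := Int.toNat_of_nonneg (by omega)
    have hQ : ∀ i : ℕ, qPoch (q : ℂ) (q : ℂ) i ≠ 0 := qPoch_ne_zero hq0 hq1 hq0 hq1
    have hT : ∀ i : ℕ, qPoch (t : ℂ) (q : ℂ) i ≠ 0 := qPoch_ne_zero ht0 ht1 hq0 hq1
    have h1q : ∀ i : ℕ, (1 : ℂ) - (q : ℂ) * (q : ℂ) ^ i ≠ 0 := one_sub_ne hq0 hq1 hq0 hq1
    have hBm1 : b ^ 2 - 1 ≠ 0 := sub_ne_zero.2 hb1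
    have key := key_sum (q : ℂ) (t : ℂ) (s : ℂ) hsC hs2C n hQ h1q (b ^ 2)
    -- rewrite the three Macdonald polynomials
    rw [Mac_eq (q:ℂ) (t:ℂ) l1 l2 hl ((r:ℂ) * a) ((r:ℂ) * b) (mul_ne_zero hrC hb),
        Mac_eq (q:ℂ) (t:ℂ) l1 l2 hl ((r:ℂ) * a) (b / (r:ℂ)) (div_ne_zero hb hrC),
        Mac_eq (q:ℂ) (t:ℂ) l1 l2 hl a b hb]
    -- normalize the shifted arguments
    have hA : ((r:ℂ) * b) ^ 2 = (q:ℂ) * b ^ 2 := by rw [mul_pow, hr2C]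
    have hBq : (b / (r:ℂ)) ^ 2 = b ^ 2 / (q:ℂ) := by rw [div_pow, hr2C]
    have hRn : ((r:ℂ) * b) ^ n = (r:ℂ) ^ n * b ^ n := mul_pow _ _ _
    have hRn2 : (b / (r:ℂ)) ^ n = b ^ n / (r:ℂ) ^ n := div_pow _ _ _
    have hS1 : Sc (q:ℂ) (t:ℂ) n ((q:ℂ) * b ^ 2)
        = ∑ k ∈ range (n + 1), cc (q:ℂ) (t:ℂ) n k * ((q:ℂ) ^ (n - k) * (b ^ 2) ^ (n - k)) := by
      unfold Sc
      exact Finset.sum_congr rfl fun k _ => by rw [mul_pow]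
    have hS2 : Sc (q:ℂ) (t:ℂ) n (b ^ 2 / (q:ℂ))
        = ((q:ℂ) ^ n)⁻¹ *
          ∑ k ∈ range (n + 1), cc (q:ℂ) (t:ℂ) n k * ((q:ℂ) ^ k * (b ^ 2) ^ (n - k)) := by
      unfold Sc
      rw [Finset.mul_sum]
      apply Finset.sum_congr rfl
      intro k hk
      have hk' : k ≤ n := by have := Finset.mem_range.1 hk; omega
      have hqq : (q:ℂ) ^ n = (q:ℂ) ^ k * (q:ℂ) ^ (n - k) := by
        rw [← pow_add]; congr 1; omega
      rw [div_pow, hqq]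
      have h1 : (q:ℂ) ^ (n - k) ≠ 0 := pow_ne_zero _ hqC
      have h2 : (q:ℂ) ^ k ≠ 0 := pow_ne_zero _ hqC
      field_simp
    have hS0 : Sc (q:ℂ) (t:ℂ) n (b ^ 2)
        = ∑ k ∈ range (n + 1), cc (q:ℂ) (t:ℂ) n k * (b ^ 2) ^ (n - k) := rfl
    rw [hA, hBq, hRn, hRn2, hS1, hS2, hS0]
    -- zpow bookkeeping
    rw [mul_zpow]
    have hrL : (r:ℂ) ^ (l1 + l2) = (q:ℂ) ^ l1 * (r:ℂ) ^ n := by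
      have h : l1 + l2 = 2 * l1 + (n : ℤ) := by omega
      rw [h, zpow_add₀ hrC, zpow_natCast, ← hr2C, ← zpow_natCast (r:ℂ) 2, ← zpow_mul]
      norm_num
    have hql2 : (q:ℂ) ^ l2 = (q:ℂ) ^ l1 * (q:ℂ) ^ n := by
      have h : l2 = l1 + (n : ℤ) := by omega
      rw [h, zpow_add₀ hqC, zpow_natCast]
    rw [hrL, hql2]
    have hqn : (q:ℂ) ^ n = ((r:ℂ) ^ n) ^ 2 := by
      rw [← pow_mul, mul_comm, pow_mul, hr2C]
    rw [hqn] at key ⊢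
    -- v-factor simplification
    have hab : a * b - a / b ≠ 0 := by
      have h : a * b - a / b = a * (b ^ 2 - 1) / b := by field_simp
      rw [h]
      exact div_ne_zero (mul_ne_zero ha hBm1) hb
    have hba : a / b - a * b ≠ 0 := by
      intro h; apply hab; linear_combination -h
    have hv12 : ((s:ℂ) * (a * b) - (s:ℂ)⁻¹ * (a / b)) / (a * b - a / b)
        = ((s:ℂ) * b ^ 2 - (s:ℂ)⁻¹) / (b ^ 2 - 1) := by
      rw [div_eq_div_iff hab hBm1]
      field_simp
    have hv21 : ((s:ℂ) * (a / b) - (s:ℂ)⁻¹ * (a * b)) / (a / b - a * b)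
        = ((s:ℂ)⁻¹ * b ^ 2 - (s:ℂ)) / (b ^ 2 - 1) := by
      rw [div_eq_div_iff hba hBm1]
      field_simp
      ring
    rw [hv12, hv21]
    set S0 := ∑ k ∈ range (n + 1), cc (q:ℂ) (t:ℂ) n k * (b ^ 2) ^ (n - k) with hS0d
    set S1 := ∑ k ∈ range (n + 1), cc (q:ℂ) (t:ℂ) n k * ((q:ℂ) ^ (n - k) * (b ^ 2) ^ (n - k)) with hS1d
    set S2 := ∑ k ∈ range (n + 1), cc (q:ℂ) (t:ℂ) n k * ((q:ℂ) ^ k * (b ^ 2) ^ (n - k)) with hS2d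
    have hbn : b ^ n ≠ 0 := pow_ne_zero _ hb
    have hrn : (r:ℂ) ^ n ≠ 0 := pow_ne_zero _ hrC
    have haL : a ^ (l1 + l2) ≠ 0 := zpow_ne_zero _ ha
    have hqL : (q:ℂ) ^ l1 ≠ 0 := zpow_ne_zero _ hqC
    linear_combination assemble (s:ℂ) (b ^ 2) ((r:ℂ) ^ n) (b ^ n) ((q:ℂ) ^ l1)
      (a ^ (l1 + l2)) (qPoch (q:ℂ) (q:ℂ) n / qPoch (t:ℂ) (q:ℂ) n) S0 S1 S2
      hsC hrn hbn hBm1 key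
  · unfold MacdonaldA1
    rw [mul_zpow]
    ring
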